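/- Let p be an odd prime, G a finite p-group, and χ the character of an irreducible finite-dimensional complex representation of G with χ not the trivial character. Then ℚ(χ) ≠ ℚ; that is, there exists g ∈ G such that χ(g) is not a rational number. -/

import Mathlib

open CategoryTheory Module

/-- An irreducible complex character of a group `G`: the trace character of some
irreducible (simple) finite-dimensional complex representation of `G`. -/
def IsIrredCharacter {G : Type} [Monoid G] (χ : G → ℂ) : Prop :=
  ∃ V : FDRep ℂ G, CategoryTheory.Simple V ∧ V.character = χ

theorem stmt_0 {p : ℕ} (hp : p.Prime) (hodd : Odd p)
    {G : Type} [Group G] [Fintype G] (hpG : IsPGroup p G)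
    (χ : G → ℂ) (hχ : IsIrredCharacter χ)
    (hnt : χ ≠ fun _ => 1) :
    IntermediateField.adjoin ℚ (Set.range χ) ≠ ⊥ ∧
      ∃ g : G, ∀ q : ℚ, (q : ℂ) ≠ χ g := by
  obtain ⟨V, hV, hchar⟩ := hχ
  haveI := hV
  have key : ∃ g : G, ∀ q : ℚ, (q : ℂ) ≠ χ g := by
    by_contra hcon
    push_neg at hcon
    -- `hcon : ∀ g, ∃ q, (q:ℂ) = χ g`
    have hnz : (𝟙 V : V ⟶ V) ≠ 0 := CategoryTheory.id_nonzero V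
    have hn : finrank ℂ V ≠ 0 := by
      intro h0
      haveI : Subsingleton V := Module.finrank_zero_iff.mp h0
      apply hnz
      ext v
      exact @Subsingleton.elim ↥V this _ _
    have hdim : finrank ℂ (V ⟶ V) = 1 := by
      rw [FDRep.finrank_hom_simple_simple V V, if_pos ⟨Iso.refl V⟩]
    set φ := Representation.asGroupHom (V.ρ : Representation ℂ G V) with hφ
    have hφ_apply : ∀ g : G, (↑(φ g) : ↥V →ₗ[ℂ] ↥V) = V.ρ g := fun g => rfl
    set K := φ.range with hK
    rcases subsingleton_or_nontrivial K with hsub | hKnt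
    · -- trivial action: dimension must be 1, so χ = 1, contradiction
      have htriv : ∀ g : G, V.ρ g = LinearMap.id := by
        intro g
        have h1 : (⟨φ g, ⟨g, rfl⟩⟩ : K) = (1 : K) := Subsingleton.elim _ _
        have h2 : φ g = 1 := congrArg Subtype.val h1
        rw [← hφ_apply g, h2]
        rfl
      obtain ⟨L, hLinj⟩ : ∃ L : (↥V →ₗ[ℂ] ↥V) →ₗ[ℂ] (V ⟶ V), Function.Injective L := by
        refine ⟨{ toFun := fun f => ⟨FGModuleCat.ofHom f, fun g => by
                    ext v
                    show f ((V.ρ (g : G)) v) = (V.ρ (g : G)) (f v)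
                    rw [htriv]; rfl⟩
                  map_add' := fun f g => rfl
                  map_smul' := fun c f => rfl }, fun f g h => ?_⟩
        exact congrArg (fun f => f.hom.hom.hom) h
      have hle : finrank ℂ (↥V →ₗ[ℂ] ↥V) ≤ finrank ℂ (V ⟶ V) :=
        LinearMap.finrank_le_finrank_of_injective hLinj
      rw [Module.finrank_linearMap, hdim] at hle
      have hn1 : finrank ℂ V = 1 := by nlinarith [Nat.pos_of_ne_zero hn]
      apply hnt
      funext g
      rw [← hchar]
      show LinearMap.trace ℂ V (V.ρ g) = 1
      rw [htriv g, LinearMap.trace_id, hn1, Nat.cast_one]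
    · -- nontrivial image: use a central element
      haveI : Finite K := by
        have : Finite (Set.range φ) := Set.finite_range φ
        exact this
      have hKp : IsPGroup p K := by
        rintro ⟨x, g, rfl⟩
        obtain ⟨k, hk⟩ := hpG g
        refine ⟨k, ?_⟩
        apply Subtype.ext
        show (φ g) ^ p ^ k = 1
        rw [← map_pow, hk, map_one]
      haveI : Fact p.Prime := ⟨hp⟩
      haveI := hKp.center_nontrivial
      obtain ⟨z', hz'⟩ := exists_ne (1 : Subgroup.center K)
      obtain ⟨z, hz⟩ := (z' : K).2
      have hu1 : ((z' : K) : (↥V →ₗ[ℂ] ↥V)ˣ) ≠ 1 := by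
        intro h
        exact hz' (Subtype.ext (Subtype.ext h))
      have hcomm : ∀ g : G, V.ρ g * V.ρ z = V.ρ z * V.ρ g := by
        intro g
        have h1 : (⟨φ g, ⟨g, rfl⟩⟩ : K) * (z' : K) = (z' : K) * ⟨φ g, ⟨g, rfl⟩⟩ :=
          (Subgroup.mem_center_iff.mp z'.2 _)
        have h2 : φ g * (↑(z' : K)) = (↑(z' : K)) * φ g := congrArg Subtype.val h1
        rw [← hz] at h2
        have h3 := congrArg Units.val h2
        simpa [hφ_apply] using h3
      obtain ⟨f, hf⟩ : ∃ f : V ⟶ V, f.hom.hom.hom = V.ρ z := by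
        refine ⟨⟨FGModuleCat.ofHom (V.ρ z), fun g => ?_⟩, rfl⟩
        ext v
        show (V.ρ z) ((V.ρ (g : G)) v) = (V.ρ (g : G)) ((V.ρ z) v)
        exact (LinearMap.congr_fun (hcomm g) v).symm
      obtain ⟨c, hc⟩ := (finrank_eq_one_iff_of_nonzero' (𝟙 V) hnz).mp hdim f
      have hρz : V.ρ z = c • LinearMap.id := by
        rw [← hf, ← hc, Action.smul_hom]
        rfl
      -- c ≠ 1
      have hc1 : c ≠ 1 := by
        intro h
        apply hu1
        apply Units.ext
        show (↑(z' : K) : (↥V →ₗ[ℂ] ↥V)ˣ).val = 1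
        calc ((↑(z' : K) : (↥V →ₗ[ℂ] ↥V)ˣ) : ↥V →ₗ[ℂ] ↥V) = V.ρ z := by rw [← hz]; exact hφ_apply z
          _ = LinearMap.id := by rw [hρz, h, one_smul]
          _ = 1 := rfl
      -- c is a p-power root of unity
      obtain ⟨k, hk⟩ := hpG z
      have hcpow : c ^ p ^ k = 1 := by
        have h1 : (V.ρ z) ^ p ^ k = 1 := by rw [← map_pow, hk, map_one]
        rw [hρz, smul_pow, Module.End.id_pow, ← Module.End.one_eq_id] at h1
        have h2 := congrArg (LinearMap.trace ℂ V) h1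
        rw [map_smul, Module.End.one_eq_id, LinearMap.trace_id, smul_eq_mul] at h2
        have hcast : ((finrank ℂ ↥V : ℂ)) ≠ 0 := Nat.cast_ne_zero.mpr hn
        exact mul_right_cancel₀ hcast (by rw [h2, one_mul])
      -- c is rational (real), from χ z = c * n rational
      obtain ⟨q, hq⟩ := hcon z
      have hχz : χ z = c * (finrank ℂ ↥V : ℂ) := by
        rw [← hchar]
        show LinearMap.trace ℂ V (V.ρ z) = _
        rw [hρz, map_smul, LinearMap.trace_id]
        rfl
      have hcast : ((finrank ℂ ↥V : ℂ)) ≠ 0 := Nat.cast_ne_zero.mpr hn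
      have hcreal : ((((q : ℝ) / (finrank ℂ ↥V : ℝ)) : ℝ) : ℂ) = c := by
        have : c = (q : ℂ) / (finrank ℂ ↥V : ℂ) := by
          rw [eq_div_iff hcast, ← hχz, hq]
        rw [this]
        push_cast
        ring
      set r : ℝ := (q : ℝ) / (finrank ℂ ↥V : ℝ) with hr
      have hre : r ^ p ^ k = 1 := by
        rw [← hcreal] at hcpow
        exact_mod_cast hcpow
      have hr1 : r = 1 := by
        have hodd' : Odd (p ^ k) := hodd.pow
        exact hodd'.strictMono_pow (R := ℝ) |>.injective (by rw [hre, one_pow])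
      exact hc1 (by rw [← hcreal, hr1, Complex.ofReal_one])
  refine ⟨?_, key⟩
  intro hbot
  obtain ⟨g, hg⟩ := key
  have hmem : χ g ∈ IntermediateField.adjoin ℚ (Set.range χ) :=
    IntermediateField.subset_adjoin _ _ ⟨g, rfl⟩
  rw [hbot, IntermediateField.mem_bot] at hmem
  obtain ⟨q, hq⟩ := hmem
  exact hg q ((eq_ratCast (algebraMap ℚ ℂ) q ▸ hq))
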